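/- Let H be a Gδ-dense subgroup of a topological group G (with the subspace topology). If H is simply sm-factorizable, then H is C-embedded in G, i.e., every continuous function f : H → ℝ extends to a continuous function on G. -/

import Mathlib

open Topology TopologicalSpace Pointwise Function Set

def IsCozero {X : Type*} [TopologicalSpace X] (U : Set X) : Prop :=
  ∃ f : X → ℝ, Continuous f ∧ U = f ⁻¹' {x : ℝ | x ≠ 0}

/-- A topological group is simply sm-factorizable if every cozero set is saturated with
respect to some continuous surjective homomorphism onto a separable metrizable topological group. -/
def SimplySMFactorizable (G : Type*) [Group G] [TopologicalSpace G] : Prop :=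
  ∀ U : Set G, IsCozero U →
    ∃ (H : Type) (gH : Group H) (tH : TopologicalSpace H),
      letI := gH
      letI := tH
      IsTopologicalGroup H ∧ SeparableSpace H ∧ MetrizableSpace H ∧
        ∃ π : G →* H, Continuous π ∧ Surjective π ∧ ⇑π ⁻¹' (⇑π '' U) = U

/-- A Gδ-dense simply sm-factorizable subgroup of a topological group is C-embedded. -/
theorem statement15 (G : Type*) [Group G] [TopologicalSpace G] [IsTopologicalGroup G]
    (H : Subgroup G)
    (hdense : ∀ s : Set G, IsGδ s → s.Nonempty → (s ∩ (H : Set G)).Nonempty)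
    (hH : SimplySMFactorizable H) :
    ∀ f : H → ℝ, Continuous f →
      ∃ F : G → ℝ, Continuous F ∧ ∀ h : H, F ↑h = f h := by
  intro f hf
  set U : ℚ × ℚ → Set H := fun i => f ⁻¹' (Set.Ioo (i.1 : ℝ) (i.2 : ℝ)) with hU
  have hcoz : ∀ i, IsCozero (U i) := by
    rintro ⟨p, q⟩
    refine ⟨fun h => max 0 (min (f h - (p : ℝ)) ((q : ℝ) - f h)),
      continuous_const.max ((hf.sub continuous_const).min (continuous_const.sub hf)), ?_⟩
    ext h
    simp only [hU, mem_preimage, mem_Ioo, mem_setOf_eq]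
    constructor
    · rintro ⟨h1, h2⟩
      have hm : 0 < min (f h - (p : ℝ)) ((q : ℝ) - f h) := lt_min (by linarith) (by linarith)
      rw [max_eq_right hm.le]
      exact ne_of_gt hm
    · intro hne
      rcases le_or_gt (min (f h - (p : ℝ)) ((q : ℝ) - f h)) 0 with hm | hm
      · exact absurd (max_eq_left hm) hne
      · rw [lt_min_iff] at hm
        exact ⟨by linarith [hm.1], by linarith [hm.2]⟩
  -- For each rational pair, extract a countable family of open sets in G around 1 that
  -- controls membership in U i.
  have main : ∀ i : ℚ × ℚ, ∃ A : ℕ → Set G,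
      (∀ m, IsOpen (A m)) ∧ (∀ m, (1 : G) ∈ A m) ∧
      ∀ n : H, (∀ m, (n : G) ∈ A m) → ∀ h' : H, (h' ∈ U i ↔ h' * n ∈ U i) := by
    intro i
    obtain ⟨K, gK, tK, hTG, hSep, hMet, π, hc, hs, hsat⟩ := hH (U i) (hcoz i)
    letI := gK; letI := tK; haveI := hMet
    letI : MetricSpace K := TopologicalSpace.metrizableSpaceMetric K
    have hpre : ∀ m : ℕ, ∃ t : Set G, IsOpen t ∧
        Subtype.val ⁻¹' t = ⇑π ⁻¹' Metric.ball (1 : K) (1 / (m + 1)) := by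
      intro m
      exact isOpen_induced_iff.mp ((Metric.isOpen_ball).preimage hc)
    choose A hAo hAe using hpre
    refine ⟨A, hAo, ?_, ?_⟩
    · intro m
      have h1 : (1 : H) ∈ ⇑π ⁻¹' Metric.ball (1 : K) (1 / (m + 1)) := by
        simp only [mem_preimage, map_one, Metric.mem_ball, dist_self]
        positivity
      rw [← hAe] at h1
      simpa using h1
    · intro n hn h'
      have hπn : π n = 1 := by
        by_contra hne
        obtain ⟨m, hm⟩ := exists_nat_one_div_lt (dist_pos.mpr hne)
        have h2 : n ∈ ⇑π ⁻¹' Metric.ball (1 : K) (1 / (m + 1)) := by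
          rw [← hAe]; exact hn m
        simp only [mem_preimage, Metric.mem_ball] at h2
        linarith
      have hmm : π (h' * n) = π h' := by rw [map_mul, hπn, mul_one]
      constructor
      · intro hu
        have h3 : h' * n ∈ ⇑π ⁻¹' (⇑π '' U i) := ⟨h', hu, hmm.symm⟩
        rwa [hsat] at h3
      · intro hu
        have h3 : h' ∈ ⇑π ⁻¹' (⇑π '' U i) := ⟨h' * n, hu, hmm⟩
        rwa [hsat] at h3
  choose A hAo hA1 hAsat using main
  -- Enumerate all the open sets
  let e : ℕ ≃ (ℚ × ℚ) × ℕ := (Denumerable.eqv ((ℚ × ℚ) × ℕ)).symm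
  let Q : ℕ → Set G := fun n => A (e n).1 (e n).2
  have hQo : ∀ n, IsOpen (Q n) := fun n => hAo _ _
  have hQ1 : ∀ n, (1 : G) ∈ Q n := fun n => hA1 _ _
  -- Build the symmetric shrinking chain V
  have step : ∀ (W : Set G) (m : ℕ), ∃ V : Set G, IsOpen W → (1 : G) ∈ W →
      IsOpen V ∧ (1 : G) ∈ V ∧ V⁻¹ = V ∧ V ⊆ Q m ∧ V * V ⊆ W := by
    intro W m
    by_cases hW : IsOpen W ∧ (1 : G) ∈ W
    · have hmem : W ∩ Q m ∈ 𝓝 (1 : G) := (hW.1.inter (hQo m)).mem_nhds ⟨hW.2, hQ1 m⟩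
      obtain ⟨V₁, hV₁o, hV₁1, hV₁m⟩ := exists_open_nhds_one_mul_subset hmem
      refine ⟨V₁ ∩ V₁⁻¹, fun _ _ => ⟨hV₁o.inter hV₁o.inv, ⟨hV₁1, by simpa using hV₁1⟩, ?_, ?_, ?_⟩⟩
      · rw [Set.inter_inv, inv_inv, Set.inter_comm]
      · intro v hv
        have h4 : v * 1 ∈ V₁ * V₁ := mul_mem_mul hv.1 hV₁1
        rw [mul_one] at h4
        exact (hV₁m h4).2
      · rintro v ⟨a, ha, b, hb, rfl⟩
        exact (hV₁m (mul_mem_mul ha.1 hb.1)).1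
    · exact ⟨∅, fun h1 h2 => absurd ⟨h1, h2⟩ hW⟩
  choose stepF hstepF using step
  let V : ℕ → Set G := fun n => Nat.rec (Q 0 ∩ (Q 0)⁻¹) (fun m Vm => stepF Vm (m + 1)) n
  have hV0 : V 0 = Q 0 ∩ (Q 0)⁻¹ := rfl
  have hVrec : ∀ n, V (n + 1) = stepF (V n) (n + 1) := fun n => rfl
  have hVgood : ∀ n, IsOpen (V n) ∧ (1 : G) ∈ V n ∧ (V n)⁻¹ = V n ∧ V n ⊆ Q n := by
    intro n
    induction n with
    | zero =>
      refine ⟨(hQo 0).inter (hQo 0).inv, ⟨hQ1 0, by simpa using hQ1 0⟩, ?_, inter_subset_left⟩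
      rw [hV0, Set.inter_inv, inv_inv, Set.inter_comm]
    | succ m ih =>
      obtain ⟨h1, h2, h3, h4, h5⟩ := hstepF (V m) (m + 1) ih.1 ih.2.1
      exact ⟨h1, h2, h3, h4⟩
  have hVmul : ∀ n, V (n + 1) * V (n + 1) ⊆ V n := fun n =>
    (hstepF (V n) (n + 1) (hVgood n).1 (hVgood n).2.1).2.2.2.2
  have hVA : ∀ (i : ℚ × ℚ) (m : ℕ), V (e.symm (i, m)) ⊆ A i m := by
    intro i m
    have h1 := (hVgood (e.symm (i, m))).2.2.2
    have h2 : Q (e.symm (i, m)) = A i m := by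
      show A (e (e.symm (i, m))).1 (e (e.symm (i, m))).2 = A i m
      rw [e.apply_symm_apply]
    rwa [h2] at h1
  -- f is invariant under multiplication by elements of H ∩ ⋂ V
  have keyA : ∀ n : H, (∀ j, (n : G) ∈ V j) → ∀ h : H, f (h * n) = f h := by
    intro n hn h
    have keyPi : ∀ i : ℚ × ℚ, ∀ h' : H, (h' ∈ U i ↔ h' * n ∈ U i) := by
      intro i h'
      exact hAsat i n (fun m => hVA i m (hn _)) h'
    by_contra hne
    rcases lt_or_gt_of_ne hne with hlt | hgt
    · obtain ⟨p, hp1, hp2⟩ := exists_rat_btwn hlt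
      obtain ⟨q, hq⟩ := exists_rat_gt (f h)
      have hmem : h ∈ U (p, q) := by
        simp only [hU, mem_preimage, mem_Ioo]; exact ⟨hp2, hq⟩
      have h5 := (keyPi (p, q) h).mp hmem
      simp only [hU, mem_preimage, mem_Ioo] at h5
      linarith [h5.1]
    · obtain ⟨q, hq1, hq2⟩ := exists_rat_btwn hgt
      obtain ⟨p, hp⟩ := exists_rat_lt (f h)
      have hmem : h ∈ U (p, q) := by
        simp only [hU, mem_preimage, mem_Ioo]; exact ⟨hp, hq1⟩
      have h5 := (keyPi (p, q) h).mp hmem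
      simp only [hU, mem_preimage, mem_Ioo] at h5
      linarith [h5.2]
  -- Choice of a point of H in each coset x · ⋂ V
  have hSx : ∀ x : G, ∃ h : H, ∀ j, x⁻¹ * (h : G) ∈ V j := by
    intro x
    have hset : {y : G | ∀ j, x⁻¹ * y ∈ V j} = ⋂ j, (fun y => x⁻¹ * y) ⁻¹' V j := by
      ext y; simp
    have hGδ : IsGδ {y : G | ∀ j, x⁻¹ * y ∈ V j} := by
      rw [hset]
      exact IsGδ.iInter fun j => ((hVgood j).1.preimage (continuous_const.mul continuous_id)).isGδ
    have hne : {y : G | ∀ j, x⁻¹ * y ∈ V j}.Nonempty := by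
      refine ⟨x, fun j => ?_⟩
      rw [inv_mul_cancel]
      exact (hVgood j).2.1
    obtain ⟨y, hy1, hy2⟩ := hdense _ hGδ hne
    exact ⟨⟨y, hy2⟩, hy1⟩
  choose hx hhx using hSx
  refine ⟨fun x => f (hx x), ?_, ?_⟩
  · -- Continuity
    rw [continuous_iff_continuousAt]
    intro x₀
    refine Metric.tendsto_nhds.mpr ?_
    intro ε hε
    set h₀ := hx x₀ with hh₀
    have hcf : f ⁻¹' Metric.ball (f h₀) ε ∈ 𝓝 h₀ := hf.continuousAt (Metric.ball_mem_nhds _ hε)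
    rw [mem_nhds_iff] at hcf
    obtain ⟨s, hs1, hs2, hs3⟩ := hcf
    obtain ⟨O, hOo, hOe⟩ := isOpen_induced_iff.mp hs2
    have hO : ∀ h' : H, (h' : G) ∈ O → dist (f h') (f h₀) < ε := by
      intro h' hh'
      have h6 : h' ∈ s := by rw [← hOe]; exact hh'
      exact hs1 h6
    have hh₀O : (h₀ : G) ∈ O := by
      have h7 := hs3
      rw [← hOe] at h7
      exact h7
    set t := ((h₀ : G))⁻¹ * x₀ with ht
    have htP : ∀ j, t ∈ V j := by
      intro j
      have heq : t = (x₀⁻¹ * (h₀ : G))⁻¹ := by rw [ht]; group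
      rw [heq, ← (hVgood j).2.2.1]
      exact Set.inv_mem_inv.mpr (hhx x₀ j)
    have hΩo : IsOpen ((fun y => y * t⁻¹) ⁻¹' O) :=
      hOo.preimage (continuous_id.mul continuous_const)
    have hx₀Ω : x₀ ∈ (fun y => y * t⁻¹) ⁻¹' O := by
      have heq : x₀ * t⁻¹ = (h₀ : G) := by rw [ht]; group
      simp only [mem_preimage, heq]
      exact hh₀O
    filter_upwards [hΩo.mem_nhds hx₀Ω] with x hxΩ
    set h := hx x with hh
    have hhP : ∀ j, ((h : G))⁻¹ * (x * t⁻¹) ∈ V j := by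
      intro j
      have h1 : (x⁻¹ * (h : G))⁻¹ ∈ V (j + 1) := by
        rw [← (hVgood (j + 1)).2.2.1]
        exact Set.inv_mem_inv.mpr (hhx x (j + 1))
      have h2 : t⁻¹ ∈ V (j + 1) := by
        rw [← (hVgood (j + 1)).2.2.1]
        exact Set.inv_mem_inv.mpr (htP (j + 1))
      have heq : ((h : G))⁻¹ * (x * t⁻¹) = (x⁻¹ * (h : G))⁻¹ * t⁻¹ := by group
      rw [heq]
      exact hVmul j (mul_mem_mul h1 h2)
    have hset : {y : G | ∀ j, ((h : G))⁻¹ * y ∈ V j} =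
        ⋂ j, (fun y => ((h : G))⁻¹ * y) ⁻¹' V j := by ext y; simp
    have hGδ : IsGδ (O ∩ {y : G | ∀ j, ((h : G))⁻¹ * y ∈ V j}) := by
      refine IsGδ.inter hOo.isGδ ?_
      rw [hset]
      exact IsGδ.iInter fun j => ((hVgood j).1.preimage (continuous_const.mul continuous_id)).isGδ
    have hne : (O ∩ {y : G | ∀ j, ((h : G))⁻¹ * y ∈ V j}).Nonempty :=
      ⟨x * t⁻¹, hxΩ, hhP⟩
    obtain ⟨y, ⟨hyO, hyP⟩, hyH⟩ := hdense _ hGδ hne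
    have hfh : f (⟨y, hyH⟩ : H) = f h := by
      have hn : ∀ j, ((h⁻¹ * ⟨y, hyH⟩ : H) : G) ∈ V j := by
        intro j
        have h8 := hyP j
        simpa using h8
      have h9 := keyA _ hn h
      rw [mul_inv_cancel_left] at h9
      exact h9
    have hfin : dist (f (⟨y, hyH⟩ : H)) (f h₀) < ε := hO _ hyO
    rw [hfh] at hfin
    exact hfin
  · -- Extension property
    intro h
    have hn : ∀ j, (((hx ↑h)⁻¹ * h : H) : G) ∈ V j := by
      intro j
      have h1 : ((↑h : G))⁻¹ * ((hx ↑h : H) : G) ∈ V j := hhx (↑h) j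
      have h2 : (((↑h : G))⁻¹ * ((hx ↑h : H) : G))⁻¹ ∈ V j := by
        rw [← (hVgood j).2.2.1]
        exact Set.inv_mem_inv.mpr h1
      have heq : (((hx ↑h)⁻¹ * h : H) : G) = (((↑h : G))⁻¹ * ((hx ↑h : H) : G))⁻¹ := by
        push_cast
        group
      rwa [heq]
    have h9 := keyA _ hn (hx ↑h)
    rw [mul_inv_cancel_left] at h9
    exact h9.symm
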